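/- Let (V,R) = ⊕_{i=1}^k (Vᵢ, R_{φᵢ}) with each φᵢ nondegenerate and ker R = 0 (equivalently each dim Vᵢ ≥ 2). Then for every A ∈ G_R there exists a permutation σ of {1,…,k} such that A(Vᵢ) = V_{σ(i)} for all i. -/

import Mathlib

/-- The canonical algebraic curvature tensor built from a symmetric bilinear form. -/
def canACT {V : Type*} [AddCommGroup V] [Module ℝ V]
    (φ : LinearMap.BilinForm ℝ V) (x y z w : V) : ℝ :=
  φ x w * φ y z - φ x z * φ y w

/-- Linear dependence of a pair of vectors. -/
def Dep {V : Type*} [AddCommGroup V] [Module ℝ V] (a b : V) : Prop :=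
  ∃ c : ℝ, a = c • b ∨ b = c • a

theorem stmt15 {V : Type*} [AddCommGroup V] [Module ℝ V] [FiniteDimensional ℝ V]
    (k : ℕ) (Vs : Fin k → Submodule ℝ V) (hint : DirectSum.IsInternal Vs)
    (hdims : ∀ s, 2 ≤ Module.finrank ℝ (Vs s))
    (φs : Fin k → LinearMap.BilinForm ℝ V)
    (hsymm : ∀ s, ∀ x y : V, φs s x y = φs s y x)
    -- each φ_s is nondegenerate on V_s:
    (hnd : ∀ s, ∀ v ∈ Vs s, (∀ w ∈ Vs s, φs s v w = 0) → v = 0)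
    (R : V →ₗ[ℝ] V →ₗ[ℝ] V →ₗ[ℝ] V →ₗ[ℝ] ℝ)
    -- R restricts to R_{φ_s} on V_s:
    (hRs : ∀ s, ∀ x ∈ Vs s, ∀ y ∈ Vs s, ∀ z ∈ Vs s, ∀ w ∈ Vs s,
      R x y z w = canACT (φs s) x y z w)
    -- R vanishes on mixed arguments:
    (hmix : ∀ x y z w : V, ∀ sx sy sz sw : Fin k,
      x ∈ Vs sx → y ∈ Vs sy → z ∈ Vs sz → w ∈ Vs sw →
      ¬(sx = sy ∧ sy = sz ∧ sz = sw) → R x y z w = 0)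
    -- ker R = 0:
    (hker : ∀ v : V, (∀ x y z : V, R v x y z = 0) → v = 0)
    (A : V ≃ₗ[ℝ] V)
    (hA : ∀ x y z w : V, R (A x) (A y) (A z) (A w) = R x y z w) :
    ∃ σ : Equiv.Perm (Fin k), ∀ s : Fin k,
      Submodule.map (A : V →ₗ[ℝ] V) (Vs s) = Vs (σ s) := by
  classical
  set e := LinearEquiv.ofBijective (DirectSum.coeLinearMap Vs) hint with he
  set π : Fin k → V →ₗ[ℝ] V := fun m =>
    (Vs m).subtype ∘ₗ (DFinsupp.lapply m) ∘ₗ e.symm.toLinearMap with hπ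
  have hπ0 : ∀ m (v : V), π m v = ((e.symm v) m : V) := fun m v => rfl
  have hπ1 : ∀ m (v : V), π m v ∈ Vs m := fun m v => ((e.symm v) m).2
  have hπ3 : ∀ m j (v : V), v ∈ Vs j → π m v = if m = j then v else 0 := by
    intro m j v hv
    rw [hπ0]
    by_cases h : m = j
    · subst h
      rw [if_pos rfl, hint.ofBijective_coeLinearMap_of_mem (i := m) hv]
    · rw [if_neg h, hint.ofBijective_coeLinearMap_of_mem_ne (i := j) (j := m) (fun hh => h hh.symm) hv]
      rfl
  have hπ2 : ∀ v : V, (∑ m, π m v) = v := by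
    intro v
    have hv : v ∈ (⨆ m, Vs m) := by
      rw [hint.submodule_iSup_eq_top]; trivial
    refine Submodule.iSup_induction (motive := fun x => (∑ m, π m x) = x) Vs hv ?_ ?_ ?_
    · intro j x hx
      rw [Finset.sum_congr rfl (fun m _ => hπ3 m j x hx)]
      simp
    · simp
    · intro x y hx hy
      simp only [map_add, Finset.sum_add_distrib, hx, hy]
  -- the main expansion of R in terms of blocks
  have hexpand : ∀ v u x y : V,
      R v u x y = ∑ m, canACT (φs m) (π m v) (π m u) (π m x) (π m y) := by
    intro v u x y
    have hz : ∀ a b c d, ¬(a = b ∧ b = c ∧ c = d) →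
        R (π a v) (π b u) (π c x) (π d y) = 0 := fun a b c d h =>
      hmix _ _ _ _ a b c d (hπ1 a v) (hπ1 b u) (hπ1 c x) (hπ1 d y) h
    have key : ∀ a : Fin k, (∑ b, ∑ c, ∑ d, R (π d v) (π c u) (π b x) (π a y))
        = canACT (φs a) (π a v) (π a u) (π a x) (π a y) := by
      intro a
      rw [Finset.sum_eq_single_of_mem a (Finset.mem_univ a)
        (fun b _ hb => Finset.sum_eq_zero fun c _ => Finset.sum_eq_zero fun d _ =>
          hz d c b a (fun h => hb (h.2.2)))]
      rw [Finset.sum_eq_single_of_mem a (Finset.mem_univ a)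
        (fun c _ hc => Finset.sum_eq_zero fun d _ =>
          hz d c a a (fun h => hc (h.2.1.trans h.2.2)))]
      rw [Finset.sum_eq_single_of_mem a (Finset.mem_univ a)
        (fun d _ hd => hz d a a a (fun h => hd (h.1.trans (h.2.1.trans h.2.2))))]
      exact hRs a _ (hπ1 a v) _ (hπ1 a u) _ (hπ1 a x) _ (hπ1 a y)
    conv_lhs => rw [← hπ2 v, ← hπ2 u, ← hπ2 x, ← hπ2 y]
    simp only [map_sum, LinearMap.sum_apply]
    exact Finset.sum_congr rfl fun a _ => key a
  -- basic facts about Dep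
  have hdep0r : ∀ a : V, Dep a (0 : V) := fun a => ⟨0, Or.inr (zero_smul ℝ a).symm⟩
  have hdeprefl : ∀ a : V, Dep a a := fun a => ⟨1, Or.inl (one_smul ℝ a).symm⟩
  have hdepsymm : ∀ a b : V, Dep a b → Dep b a := fun a b h => by
    obtain ⟨c, h⟩ := h; exact ⟨c, h.symm⟩
  have hdepspan : ∀ a b : V, Dep a b → b ≠ 0 → ∃ c : ℝ, a = c • b := by
    rintro a b ⟨c, h | h⟩ hb
    · exact ⟨c, h⟩
    · have hc : c ≠ 0 := fun h0 => hb (by rw [h, h0, zero_smul])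
      exact ⟨c⁻¹, by rw [h, smul_smul, inv_mul_cancel₀ hc, one_smul]⟩
  have hdep_can : ∀ (φ : LinearMap.BilinForm ℝ V) (a b : V), Dep a b →
      ∀ x y : V, canACT φ a b x y = 0 := by
    rintro φ a b ⟨c, h | h⟩ x y <;> subst h <;> simp [canACT] <;> ring
  -- characterization of dependence on a block
  have hcan_dep : ∀ i (a b : V), a ∈ Vs i → b ∈ Vs i →
      (∀ x ∈ Vs i, ∀ y ∈ Vs i, canACT (φs i) a b x y = 0) → Dep a b := by
    intro i a b ha hb h
    by_cases hb0 : b = 0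
    · subst hb0; exact hdep0r a
    · have hne : ¬ ∀ w ∈ Vs i, φs i b w = 0 := fun hh => hb0 (hnd i b hb hh)
      push_neg at hne
      obtain ⟨y₀, hy₀, hby₀⟩ := hne
      refine ⟨φs i a y₀ / φs i b y₀, Or.inl ?_⟩
      have key : ∀ w ∈ Vs i, φs i (a - (φs i a y₀ / φs i b y₀) • b) w = 0 := by
        intro w hw
        have h1 := h w hw y₀ hy₀
        simp only [canACT] at h1
        have h2 : φs i a w = (φs i a y₀ / φs i b y₀) * φs i b w := by
          field_simp
          linarith [h1]
        simp only [map_sub, map_smul, LinearMap.sub_apply, LinearMap.smul_apply,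
          smul_eq_mul, h2]
        ring
      have hmem : a - (φs i a y₀ / φs i b y₀) • b ∈ Vs i :=
        sub_mem ha (Submodule.smul_mem _ _ hb)
      exact sub_eq_zero.mp (hnd i _ hmem key)
  -- characterization of the relation Lrel in terms of components
  have hLrel : ∀ v u : V, (∀ x y, R v u x y = 0) ↔ ∀ m, Dep (π m v) (π m u) := by
    intro v u
    constructor
    · intro h m
      apply hcan_dep m _ _ (hπ1 m v) (hπ1 m u)
      intro x hx y hy
      have hh := h x y
      rw [hexpand] at hh
      rw [Finset.sum_eq_single_of_mem m (Finset.mem_univ m) ?side] at hh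
      · rw [hπ3 m m x hx, hπ3 m m y hy, if_pos rfl, if_pos rfl] at hh
        exact hh
      case side =>
        intro b _ hb
        rw [hπ3 b m x hx, if_neg hb]
        simp [canACT]
    · intro h x y
      rw [hexpand]
      exact Finset.sum_eq_zero fun m _ => hdep_can _ _ _ (h m) _ _
  -- uniqueness of blocks
  have hblockuniq : ∀ (x : V) i j, x ≠ 0 → x ∈ Vs i → x ∈ Vs j → i = j := by
    intro x i j hx hi hj
    by_contra h
    have h1 := hπ3 j i x hi
    rw [if_neg (fun hh => h hh.symm)] at h1
    have h2 := hπ3 j j x hj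
    rw [if_pos rfl] at h2
    exact hx (h2.symm.trans h1)
  -- a block cannot be contained in a line
  have hsmall : ∀ j (b : V), b ≠ 0 → (∀ u ∈ Vs j, Dep u b) → False := by
    intro j b hb h
    have hle : Vs j ≤ Submodule.span ℝ {b} := by
      intro u hu
      obtain ⟨c, hc⟩ := hdepspan u b (h u hu) hb
      rw [hc]
      exact Submodule.smul_mem _ _ (Submodule.mem_span_singleton_self b)
    have h1 : Module.finrank ℝ (Vs j) ≤ Module.finrank ℝ (Submodule.span ℝ {b}) :=
      Submodule.finrank_mono hle
    rw [finrank_span_singleton hb] at h1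
    have := hdims j
    omega
  -- pure vectors satisfy the double-annihilator property
  have hpure1 : ∀ i (v : V), v ∈ Vs i → v ≠ 0 →
      ∀ w : V, (∀ u : V, (∀ x y, R v u x y = 0) → (∀ x y, R u w x y = 0)) →
      ∃ c : ℝ, w = c • v := by
    intro i v hv hv0 w H
    have hvc : ∀ m, π m v = if m = i then v else 0 := fun m => hπ3 m i v hv
    have hja : ∀ j, j ≠ i → π j w = 0 := by
      intro j hj
      by_contra hw0
      apply hsmall j (π j w) hw0
      intro u hu
      have h1 : ∀ x y, R v u x y = 0 := by
        apply (hLrel v u).mpr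
        intro m
        rw [hvc m, hπ3 m j u hu]
        by_cases hm : m = i
        · rw [if_pos hm, if_neg (fun hh => hj (hh.symm.trans hm))]
          exact hdep0r v
        · rw [if_neg hm]
          exact ⟨0, Or.inl (zero_smul ℝ _).symm⟩
      have h2 := (hLrel u w).mp (H u h1) j
      rw [hπ3 j j u hu, if_pos rfl] at h2
      exact h2
    have h1 : ∀ x y, R v v x y = 0 := (hLrel v v).mpr fun m => hdeprefl _
    have h2 := (hLrel v w).mp (H v h1) i
    rw [hvc i, if_pos rfl] at h2
    obtain ⟨c, hc⟩ := hdepspan (π i w) v (hdepsymm _ _ h2) hv0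
    refine ⟨c, ?_⟩
    calc w = ∑ m, π m w := (hπ2 w).symm
      _ = c • v := by
          rw [Finset.sum_eq_single_of_mem i (Finset.mem_univ i) (fun j _ hj => hja j hj)]
          exact hc
  -- vectors with the double-annihilator property are pure
  have hpure2 : ∀ v : V, v ≠ 0 →
      (∀ w : V, (∀ u : V, (∀ x y, R v u x y = 0) → (∀ x y, R u w x y = 0)) →
        ∃ c : ℝ, w = c • v) →
      ∃ i, v ∈ Vs i := by
    intro v hv0 H
    have hex : ∃ i, π i v ≠ 0 := by
      by_contra h
      push_neg at h
      exact hv0 (by rw [← hπ2 v]; exact Finset.sum_eq_zero fun m _ => h m)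
    obtain ⟨i, hi⟩ := hex
    have HLL : ∀ u : V, (∀ x y, R v u x y = 0) → (∀ x y, R u (π i v) x y = 0) := by
      intro u hu
      apply (hLrel u (π i v)).mpr
      intro m
      rw [hπ3 m i (π i v) (hπ1 i v)]
      by_cases hm : m = i
      · rw [if_pos hm]
        subst hm
        exact hdepsymm _ _ ((hLrel v u).mp hu m)
      · rw [if_neg hm]
        exact hdep0r _
    obtain ⟨c, hc⟩ := H (π i v) HLL
    have hc0 : c ≠ 0 := fun h => hi (by rw [hc, h, zero_smul])
    refine ⟨i, ?_⟩
    have hveq : v = c⁻¹ • π i v := by rw [hc, smul_smul, inv_mul_cancel₀ hc0, one_smul]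
    rw [hveq]
    exact Submodule.smul_mem _ _ (hπ1 i v)
  -- every block has a nonzero vector
  have hnz : ∀ i, ∃ v ∈ Vs i, v ≠ 0 := by
    intro i
    apply Submodule.exists_mem_ne_zero_of_ne_bot
    intro h
    have h2 := hdims i
    rw [h, finrank_bot] at h2
    omega
  -- the key step: any R-preserving equivalence maps blocks into blocks
  have key : ∀ (B : V ≃ₗ[ℝ] V), (∀ x y z w, R (B x) (B y) (B z) (B w) = R x y z w) →
      ∀ i, ∃ j, ∀ v ∈ Vs i, B v ∈ Vs j := by
    intro B hB i
    have hBpure : ∀ m (v : V), v ∈ Vs m → v ≠ 0 → ∃ j, B v ∈ Vs j := by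
      intro m v hv hv0
      apply hpure2 (B v) (by simpa using hv0)
      intro w H
      have H' : ∀ u : V, (∀ x y, R v u x y = 0) → (∀ x y, R u (B.symm w) x y = 0) := by
        intro u hu
        have h1 : ∀ x y, R (B v) (B u) x y = 0 := by
          intro x y
          have hh := hB v u (B.symm x) (B.symm y)
          rw [B.apply_symm_apply, B.apply_symm_apply] at hh
          rw [hh]
          exact hu _ _
        have h2 := H (B u) h1
        intro x y
        have hh := hB u (B.symm w) x y
        rw [B.apply_symm_apply] at hh
        rw [← hh]
        exact h2 _ _
      obtain ⟨c, hc⟩ := hpure1 m v hv hv0 (B.symm w) H'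
      exact ⟨c, by rw [← B.apply_symm_apply w, hc, map_smul]⟩
    obtain ⟨v₀, hv₀, hv₀0⟩ := hnz i
    obtain ⟨j₀, hj₀⟩ := hBpure i v₀ hv₀ hv₀0
    refine ⟨j₀, ?_⟩
    intro v hv
    by_cases hv0 : v = 0
    · subst hv0
      rw [map_zero]
      exact zero_mem _
    obtain ⟨j, hj⟩ := hBpure i v hv hv0
    have hBv0 : B v ≠ 0 := by simpa using hv0
    have hBv₀0 : B v₀ ≠ 0 := by simpa using hv₀0
    by_cases hcc : ∃ c : ℝ, v = c • v₀
    · obtain ⟨c, rfl⟩ := hcc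
      rw [map_smul]
      exact Submodule.smul_mem _ _ hj₀
    · have hvv0 : v + v₀ ≠ 0 := by
        intro h
        exact hcc ⟨-1, by rw [neg_smul, one_smul, eq_neg_of_add_eq_zero_left h]⟩
      obtain ⟨m, hm⟩ := hBpure i (v + v₀) (add_mem hv hv₀) hvv0
      have hsum : B (v + v₀) = B v + B v₀ := map_add B v v₀
      suffices hjj : j = j₀ by rw [← hjj]; exact hj
      by_contra hjj
      have hmj : m = j := by
        by_contra hmj
        have e1 : π j (B (v + v₀)) = 0 := by
          rw [hπ3 j m _ hm, if_neg (fun h => hmj h.symm)]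
        rw [hsum, map_add, hπ3 j j (B v) hj, if_pos rfl,
          hπ3 j j₀ (B v₀) hj₀, if_neg hjj, add_zero] at e1
        exact hBv0 e1
      have hmj₀ : m = j₀ := by
        by_contra hmj₀
        have e1 : π j₀ (B (v + v₀)) = 0 := by
          rw [hπ3 j₀ m _ hm, if_neg (fun h => hmj₀ h.symm)]
        rw [hsum, map_add, hπ3 j₀ j (B v) hj, if_neg (fun h => hjj h.symm),
          hπ3 j₀ j₀ (B v₀) hj₀, if_pos rfl, zero_add] at e1
        exact hBv₀0 e1
      exact hjj (hmj ▸ hmj₀)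
  -- assemble the permutation
  have hA' : ∀ x y z w : V, R (A.symm x) (A.symm y) (A.symm z) (A.symm w) = R x y z w := by
    intro x y z w
    conv_rhs => rw [← A.apply_symm_apply x, ← A.apply_symm_apply y,
      ← A.apply_symm_apply z, ← A.apply_symm_apply w, hA]
  choose σf hσf using key A hA
  choose τf hτf using key A.symm hA'
  have hτσ : ∀ i, τf (σf i) = i := by
    intro i
    obtain ⟨v₀, hv₀, hv₀0⟩ := hnz i
    have h2 : A.symm (A v₀) ∈ Vs (τf (σf i)) := hτf _ _ (hσf i v₀ hv₀)
    rw [A.symm_apply_apply] at h2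
    exact hblockuniq v₀ _ _ hv₀0 h2 hv₀
  have hστ : ∀ j, σf (τf j) = j := by
    intro j
    obtain ⟨v₀, hv₀, hv₀0⟩ := hnz j
    have h2 : A (A.symm v₀) ∈ Vs (σf (τf j)) := hσf _ _ (hτf j v₀ hv₀)
    rw [A.apply_symm_apply] at h2
    exact hblockuniq v₀ _ _ hv₀0 h2 hv₀
  refine ⟨⟨σf, τf, hτσ, hστ⟩, ?_⟩
  intro s
  apply le_antisymm
  · rintro x ⟨v, hv, rfl⟩
    exact hσf s v hv
  · intro x hx
    have h1 : A.symm x ∈ Vs (τf (σf s)) := hτf _ _ hx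
    rw [hτσ] at h1
    exact ⟨A.symm x, h1, A.apply_symm_apply x⟩
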